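/- Let (x, y) ∈ ℝ^d × ℝ with x a zero-mean σ²-sub-Gaussian random vector and y a zero-mean σ²-sub-Gaussian random variable, and suppose E[y² x_j²] ≤ v₁ for some v₁ < ∞ and all j ∈ [d]. For τ₁, τ₂ > 0 define the shrunken variables x̃_j = sgn(x_j) min{|x_j|, τ₁} and ỹ = sgn(y) min{|y|, τ₂}. Then for every j ∈ [d], |E[ỹ x̃_j] − E[y x_j]| ≤ √(v₁ · P(|x_j| ≥ τ₁)) + √(v₁ · P(|y| ≥ τ₂)) ≤ √(2 v₁) · ( e^{−τ₁²/(4σ²)} + e^{−τ₂²/(4σ²)} ). -/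

import Mathlib

open MeasureTheory

noncomputable section

/-- A random variable `f` is sub-Gaussian with variance proxy `v` (zero-mean form):
its moment generating function exists and satisfies `E[exp(t f)] ≤ exp(v t²/2)`. -/
def SubGMGF {Ω : Type*} [MeasurableSpace Ω] (μ : Measure Ω) (f : Ω → ℝ) (v : ℝ) : Prop :=
  AEMeasurable f μ ∧ ∀ t : ℝ, Integrable (fun ω => Real.exp (t * f ω)) μ ∧
    ∫ ω, Real.exp (t * f ω) ∂μ ≤ Real.exp (v * t ^ 2 / 2)

/-- A random vector `X` is sub-Gaussian with variance proxy `v`: every unit-vector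
marginal `⟨u, X⟩` is sub-Gaussian with variance proxy `v`. -/
def VecSubG {Ω : Type*} [MeasurableSpace Ω] {d : ℕ} (μ : Measure Ω)
    (X : Ω → EuclideanSpace ℝ (Fin d)) (v : ℝ) : Prop :=
  ∀ u : EuclideanSpace ℝ (Fin d), ‖u‖ = 1 → SubGMGF μ (fun ω => ∑ i, u i * X ω i) v

/-- Coordinatewise shrinkage `sgn(a) min{|a|, τ}`. -/
def shrink (τ a : ℝ) : ℝ := Real.sign a * min |a| τ

lemma aux_abs_sign_le (a : ℝ) : |Real.sign a| ≤ 1 := by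
  rcases Real.sign_apply_eq a with h|h|h <;> rw [h] <;> norm_num

lemma aux_sign_mul_abs (a : ℝ) : Real.sign a * |a| = a := by
  rcases lt_trichotomy a 0 with h | h | h
  · rw [Real.sign_of_neg h, abs_of_neg h]; ring
  · simp [h]
  · rw [Real.sign_of_pos h, abs_of_pos h]; ring

lemma shrink_eq_clamp {τ : ℝ} (hτ : 0 < τ) (a : ℝ) : shrink τ a = max (-τ) (min a τ) := by
  unfold shrink
  rcases lt_trichotomy a 0 with h | h | h
  · rw [Real.sign_of_neg h, abs_of_neg h, min_eq_left (le_of_lt (lt_trans h hτ))]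
    rcases le_total (-a) τ with h2 | h2
    · rw [min_eq_left h2, max_eq_right (by linarith)]; ring
    · rw [min_eq_right h2, max_eq_left (by linarith)]; ring
  · subst h; simp [Real.sign_zero, min_eq_left hτ.le, max_eq_right (by linarith : (-τ:ℝ) ≤ 0)]
  · rw [Real.sign_of_pos h, abs_of_pos h, one_mul, max_eq_right]
    have : (0:ℝ) ≤ min a τ := le_min h.le hτ.le
    linarith

lemma abs_shrink_le_abs {τ : ℝ} (hτ : 0 ≤ τ) (a : ℝ) : |shrink τ a| ≤ |a| := by
  unfold shrink; rw [abs_mul, abs_of_nonneg (le_min (abs_nonneg a) hτ)]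
  nlinarith [aux_abs_sign_le a, abs_nonneg (Real.sign a), le_min (abs_nonneg a) hτ,
    min_le_left |a| τ]

lemma abs_shrink_le {τ : ℝ} (hτ : 0 ≤ τ) (a : ℝ) : |shrink τ a| ≤ τ := by
  unfold shrink; rw [abs_mul, abs_of_nonneg (le_min (abs_nonneg a) hτ)]
  nlinarith [aux_abs_sign_le a, abs_nonneg (Real.sign a), le_min (abs_nonneg a) hτ,
    min_le_right |a| τ]

lemma shrink_eq_self {τ a : ℝ} (h : |a| ≤ τ) : shrink τ a = a := by
  unfold shrink; rw [min_eq_left h, aux_sign_mul_abs]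

lemma abs_shrink_sub_le {τ : ℝ} (hτ : 0 ≤ τ) (a : ℝ) : |shrink τ a - a| ≤ |a| := by
  have key : shrink τ a - a = Real.sign a * (min |a| τ - |a|) := by
    rw [mul_sub, aux_sign_mul_abs]; rfl
  rw [key, abs_mul, abs_of_nonpos (by simp [min_le_left] : min |a| τ - |a| ≤ 0)]
  nlinarith [aux_abs_sign_le a, abs_nonneg (Real.sign a), le_min (abs_nonneg a) hτ,
    min_le_left |a| τ]

lemma aux_exp_abs_le (x : ℝ) : Real.exp |x| ≤ Real.exp x + Real.exp (-x) := by
  rcases abs_cases x with ⟨h, _⟩ | ⟨h, _⟩ <;> rw [h]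
  · exact le_add_of_nonneg_right (Real.exp_pos _).le
  · exact le_add_of_nonneg_left (Real.exp_pos _).le

lemma aux_sq_le_exp_abs (x : ℝ) : x ^ 2 ≤ 4 * Real.exp |x| := by
  have h1 : Real.exp (|x|/2) * Real.exp (|x|/2) = Real.exp |x| := by
    rw [← Real.exp_add]; ring_nf
  have h2 : |x|/2 + 1 ≤ Real.exp (|x|/2) := Real.add_one_le_exp _
  nlinarith [abs_nonneg x, sq_abs x, sq_nonneg (|x|/2 + 1)]

lemma aux_sq_le (x : ℝ) : x ^ 2 ≤ 4 * (Real.exp x + Real.exp (-x)) := by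
  nlinarith [aux_sq_le_exp_abs x, aux_exp_abs_le x]

lemma aux_pow4_le (x : ℝ) : x ^ 4 ≤ 16 * (Real.exp (2*x) + Real.exp (-(2*x))) := by
  have h1 : x ^ 2 ≤ 4 * Real.exp |x| := aux_sq_le_exp_abs x
  have h2 : Real.exp |x| * Real.exp |x| = Real.exp (2*|x|) := by
    rw [← Real.exp_add]; ring_nf
  have h3 : Real.exp (2*|x|) ≤ Real.exp (2*x) + Real.exp (-(2*x)) := by
    have h4 : (2:ℝ)*|x| = |2*x| := by rw [abs_mul]; simp
    rw [h4]; exact aux_exp_abs_le (2*x)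
  have h5 : x^2 * x^2 ≤ (4 * Real.exp |x|) * (4 * Real.exp |x|) :=
    mul_le_mul h1 h1 (sq_nonneg x) (by positivity)
  nlinarith [h5, h2, h3]

variable {Ω : Type*} [MeasurableSpace Ω] {μ : Measure Ω} {f : Ω → ℝ} {v : ℝ}

lemma SubGMGF.integrable_exp_pair (hf : SubGMGF μ f v) (t : ℝ) :
    Integrable (fun ω => Real.exp (t * f ω) + Real.exp (-(t * f ω))) μ := by
  refine (hf.2 t).1.add ?_
  simpa [neg_mul] using (hf.2 (-t)).1

lemma SubGMGF.integrable_sq (hf : SubGMGF μ f v) : Integrable (fun ω => f ω ^ 2) μ := by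
  refine Integrable.mono ((hf.integrable_exp_pair 1).const_mul 4)
    ((hf.1.pow_const 2).aestronglyMeasurable) ?_
  filter_upwards with ω
  rw [Real.norm_eq_abs, Real.norm_eq_abs, abs_of_nonneg (sq_nonneg _),
    abs_of_nonneg (by positivity)]
  simpa using aux_sq_le (f ω)

lemma SubGMGF.integrable_pow4 (hf : SubGMGF μ f v) : Integrable (fun ω => f ω ^ 4) μ := by
  refine Integrable.mono ((hf.integrable_exp_pair 2).const_mul 16)
    ((hf.1.pow_const 4).aestronglyMeasurable) ?_
  filter_upwards with ω
  rw [Real.norm_eq_abs, Real.norm_eq_abs, abs_of_nonneg (by positivity),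
    abs_of_nonneg (by positivity)]
  simpa using aux_pow4_le (f ω)

open ProbabilityTheory in
lemma aux_tail_one [IsProbabilityMeasure μ] {σ : ℝ} (hσ : 0 < σ)
    (hint : ∀ t : ℝ, Integrable (fun ω => Real.exp (t * f ω)) μ ∧
      ∫ ω, Real.exp (t * f ω) ∂μ ≤ Real.exp (σ^2 * t ^ 2 / 2))
    {τ : ℝ} (hτ : 0 < τ) :
    (μ {ω | τ ≤ f ω}).toReal ≤ Real.exp (-τ^2/(2*σ^2)) := by
  have ht : (0:ℝ) ≤ τ/σ^2 := by positivity
  have h := measure_ge_le_exp_mul_mgf (X := f) (μ := μ) (t := τ/σ^2) τ ht (hint _).1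
  refine h.trans ?_
  have hm : mgf f μ (τ/σ^2) ≤ Real.exp (σ^2 * (τ/σ^2)^2/2) := (hint _).2
  calc Real.exp (-(τ/σ^2) * τ) * mgf f μ (τ/σ^2)
      ≤ Real.exp (-(τ/σ^2) * τ) * Real.exp (σ^2 * (τ/σ^2)^2/2) :=
        mul_le_mul_of_nonneg_left hm (Real.exp_nonneg _)
    _ = Real.exp (-τ^2/(2*σ^2)) := by
        rw [← Real.exp_add]; congr 1; field_simp; ring

lemma aux_tail_abs [IsProbabilityMeasure μ] {σ : ℝ} (hσ : 0 < σ)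
    (hf : SubGMGF μ f (σ^2)) {τ : ℝ} (hτ : 0 < τ) :
    (μ {ω | τ ≤ |f ω|}).toReal ≤ 2 * Real.exp (-τ^2/(2*σ^2)) := by
  have hsub : {ω | τ ≤ |f ω|} ⊆ {ω | τ ≤ f ω} ∪ {ω | τ ≤ -(f ω)} := by
    intro ω h
    simp only [Set.mem_setOf_eq] at h
    simp only [Set.mem_union, Set.mem_setOf_eq]
    rcases le_abs.mp h with h' | h'
    · exact Or.inl h'
    · exact Or.inr h'
  have hle : μ {ω | τ ≤ |f ω|} ≤ μ {ω | τ ≤ f ω} + μ {ω | τ ≤ -(f ω)} :=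
    (measure_mono hsub).trans (measure_union_le _ _)
  have h1 : (μ {ω | τ ≤ f ω}).toReal ≤ Real.exp (-τ^2/(2*σ^2)) :=
    aux_tail_one hσ (fun t => hf.2 t) hτ
  have h2 : (μ {ω | τ ≤ -(f ω)}).toReal ≤ Real.exp (-τ^2/(2*σ^2)) := by
    refine aux_tail_one (f := fun ω => -(f ω)) hσ (fun t => ?_) hτ
    refine ⟨by simpa [mul_neg, neg_mul] using (hf.2 (-t)).1, ?_⟩
    have := (hf.2 (-t)).2
    simp only [neg_mul, mul_neg] at this ⊢
    simpa [neg_sq] using this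
  have hfin : (μ {ω | τ ≤ f ω} + μ {ω | τ ≤ -(f ω)}) ≠ ⊤ := by
    simp [ENNReal.add_ne_top, measure_ne_top]
  calc (μ {ω | τ ≤ |f ω|}).toReal ≤ (μ {ω | τ ≤ f ω} + μ {ω | τ ≤ -(f ω)}).toReal :=
        ENNReal.toReal_mono hfin hle
    _ = (μ {ω | τ ≤ f ω}).toReal + (μ {ω | τ ≤ -(f ω)}).toReal :=
        ENNReal.toReal_add (measure_ne_top _ _) (measure_ne_top _ _)
    _ ≤ 2 * Real.exp (-τ^2/(2*σ^2)) := by linarith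

lemma aux_cauchy_schwarz [IsProbabilityMeasure μ] {g : Ω → ℝ}
    (hg : AEStronglyMeasurable g μ) (hg2 : Integrable (fun ω => g ω ^ 2) μ)
    {s : Set Ω} (hs : MeasurableSet s) :
    ∫ ω, |g ω| * s.indicator (fun _ => (1:ℝ)) ω ∂μ ≤
      Real.sqrt ((∫ ω, g ω ^ 2 ∂μ) * (μ s).toReal) := by
  have hpq : Real.HolderConjugate 2 2 := Real.holderConjugate_iff.mpr ⟨one_lt_two, by norm_num⟩
  have h2 : ENNReal.ofReal (2:ℝ) = 2 := by norm_num
  have hmf : MemLp (fun ω => |g ω|) (ENNReal.ofReal (2:ℝ)) μ := by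
    have habs : AEStronglyMeasurable (fun ω => |g ω|) μ := by
      simpa [Real.norm_eq_abs] using hg.norm
    rw [h2, memLp_two_iff_integrable_sq habs]
    simpa [sq_abs] using hg2
  have hmg : MemLp (s.indicator (fun _ => (1:ℝ))) (ENNReal.ofReal (2:ℝ)) μ :=
    memLp_indicator_const _ hs 1 (Or.inr (measure_ne_top _ _))
  have h := integral_mul_le_Lp_mul_Lq_of_nonneg hpq
    (Filter.Eventually.of_forall fun ω => abs_nonneg (g ω))
    (Filter.Eventually.of_forall fun ω => Set.indicator_nonneg (fun _ _ => zero_le_one) ω)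
    hmf hmg
  refine h.trans ?_
  have e1 : ∫ ω, |g ω| ^ (2:ℝ) ∂μ = ∫ ω, g ω ^ 2 ∂μ := by
    refine integral_congr_ae (Filter.Eventually.of_forall fun ω => ?_)
    simp [Real.rpow_two, sq_abs]
  have e2 : ∫ ω, s.indicator (fun _ => (1:ℝ)) ω ^ (2:ℝ) ∂μ = (μ s).toReal := by
    have : (fun ω => s.indicator (fun _ => (1:ℝ)) ω ^ (2:ℝ)) = s.indicator (fun _ => (1:ℝ)) := by
      funext ω; by_cases h : ω ∈ s <;> simp [h, Real.rpow_two]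
    rw [this, integral_indicator_const _ hs]; simp; rfl
  rw [e1, e2, Real.sqrt_mul (integral_nonneg (fun ω => sq_nonneg _)),
    Real.sqrt_eq_rpow, Real.sqrt_eq_rpow]

/-!
STATEMENT 15: bias of coordinatewise shrinkage for sub-Gaussian data.
-/

theorem stmt15 (d : ℕ) (σ v₁ τ₁ τ₂ : ℝ) (hσ : 0 < σ) (hv₁ : 0 < v₁)
    (hτ₁ : 0 < τ₁) (hτ₂ : 0 < τ₂)
    (μ : Measure (EuclideanSpace ℝ (Fin d) × ℝ)) [IsProbabilityMeasure μ]
    -- x is a zero-mean σ²-sub-Gaussian random vector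
    (hxsub : VecSubG μ (fun p => p.1) (σ ^ 2)) (hxmean : ∀ i, ∫ p, p.1 i ∂μ = 0)
    -- y is a zero-mean σ²-sub-Gaussian random variable
    (hysub : SubGMGF μ (fun p => p.2) (σ ^ 2)) (hymean : ∫ p, p.2 ∂μ = 0)
    -- second-moment bound E[y² x_j²] ≤ v₁
    (hmom : ∀ j : Fin d, ∫ p, p.2 ^ 2 * p.1 j ^ 2 ∂μ ≤ v₁) :
    ∀ j : Fin d,
      |∫ p, shrink τ₂ p.2 * shrink τ₁ (p.1 j) ∂μ - ∫ p, p.2 * p.1 j ∂μ|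
          ≤ Real.sqrt (v₁ * (μ {p | τ₁ ≤ |p.1 j|}).toReal)
            + Real.sqrt (v₁ * (μ {p | τ₂ ≤ |p.2|}).toReal) ∧
      |∫ p, shrink τ₂ p.2 * shrink τ₁ (p.1 j) ∂μ - ∫ p, p.2 * p.1 j ∂μ|
          ≤ Real.sqrt (2 * v₁) *
            (Real.exp (-(τ₁ ^ 2) / (4 * σ ^ 2)) + Real.exp (-(τ₂ ^ 2) / (4 * σ ^ 2))) := by
  intro j
  -- basic measurability
  have mX : Measurable (fun p : EuclideanSpace ℝ (Fin d) × ℝ => p.1 j) :=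
    (measurable_pi_apply j).comp (Measurable.comp (WithLp.measurable_ofLp _ _) measurable_fst)
  have mY : Measurable (fun p : EuclideanSpace ℝ (Fin d) × ℝ => p.2) := measurable_snd
  set A : Set (EuclideanSpace ℝ (Fin d) × ℝ) := {p | τ₁ ≤ |p.1 j|} with hA_def
  set B : Set (EuclideanSpace ℝ (Fin d) × ℝ) := {p | τ₂ ≤ |p.2|} with hB_def
  have hAm : MeasurableSet A := measurableSet_le measurable_const mX.abs
  have hBm : MeasurableSet B := measurableSet_le measurable_const mY.abs
  -- X = p.1 j is sub-Gaussian
  have hX : SubGMGF μ (fun p => p.1 j) (σ^2) := by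
    have hn : ‖(EuclideanSpace.single j (1:ℝ))‖ = 1 := by
      simp [EuclideanSpace.norm_single]
    have h := hxsub _ hn
    have he : (fun p : EuclideanSpace ℝ (Fin d) × ℝ =>
        ∑ i, EuclideanSpace.single j (1:ℝ) i * p.1 i) = fun p => p.1 j := by
      funext p; simp [EuclideanSpace.single_apply]
    rwa [he] at h
  -- integrability facts
  have intX2 := hX.integrable_sq
  have intY2 := hysub.integrable_sq
  have intX4 := hX.integrable_pow4
  have intY4 := hysub.integrable_pow4
  have intYX : Integrable (fun p : EuclideanSpace ℝ (Fin d) × ℝ => p.2 * p.1 j) μ := by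
    refine Integrable.mono ((intY2.add intX2).div_const 2)
      ((mY.mul mX).aestronglyMeasurable) ?_
    filter_upwards with p
    simp only [Pi.add_apply, Real.norm_eq_abs]
    rw [abs_mul, abs_of_nonneg (by positivity : (0:ℝ) ≤ (p.2 ^ 2 + p.1 j ^ 2) / 2)]
    nlinarith [sq_nonneg (|p.2| - |p.1 j|), sq_abs p.2, sq_abs (p.1 j),
      abs_nonneg p.2, abs_nonneg (p.1 j)]
  have intY2X2 : Integrable (fun p : EuclideanSpace ℝ (Fin d) × ℝ => p.2 ^ 2 * p.1 j ^ 2) μ := by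
    refine Integrable.mono ((intY4.add intX4).div_const 2)
      (((mY.pow_const 2).mul (mX.pow_const 2)).aestronglyMeasurable) ?_
    filter_upwards with p
    simp only [Pi.add_apply, Real.norm_eq_abs]
    rw [abs_of_nonneg (by positivity : (0:ℝ) ≤ p.2 ^ 2 * p.1 j ^ 2),
      abs_of_nonneg (by positivity : (0:ℝ) ≤ (p.2 ^ 4 + p.1 j ^ 4) / 2)]
    nlinarith [sq_nonneg (p.2 ^ 2 - p.1 j ^ 2)]
  have mshr : ∀ τ : ℝ, 0 < τ → Measurable (shrink τ) := by
    intro τ hτ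
    have : shrink τ = fun a => max (-τ) (min a τ) := funext (shrink_eq_clamp hτ)
    rw [this]
    exact measurable_const.max (measurable_id.min measurable_const)
  have int_shr : Integrable
      (fun p : EuclideanSpace ℝ (Fin d) × ℝ => shrink τ₂ p.2 * shrink τ₁ (p.1 j)) μ := by
    refine Integrable.mono (integrable_const (τ₂ * τ₁))
      ((((mshr τ₂ hτ₂).comp mY).mul ((mshr τ₁ hτ₁).comp mX)).aestronglyMeasurable) ?_
    filter_upwards with p
    rw [Real.norm_eq_abs, Real.norm_eq_abs, abs_mul,
      abs_of_nonneg (by positivity : (0:ℝ) ≤ τ₂ * τ₁)]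
    exact mul_le_mul (abs_shrink_le hτ₂.le _) (abs_shrink_le hτ₁.le _)
      (abs_nonneg _) hτ₂.le
  -- pointwise bound
  have hpt : ∀ p : EuclideanSpace ℝ (Fin d) × ℝ,
      |shrink τ₂ p.2 * shrink τ₁ (p.1 j) - p.2 * p.1 j| ≤
        |p.2 * p.1 j| * A.indicator (fun _ => (1:ℝ)) p
          + |p.2 * p.1 j| * B.indicator (fun _ => (1:ℝ)) p := by
    intro p
    have tri : |shrink τ₂ p.2 * shrink τ₁ (p.1 j) - p.2 * p.1 j| ≤
        |shrink τ₂ p.2| * |shrink τ₁ (p.1 j) - p.1 j| + |p.1 j| * |shrink τ₂ p.2 - p.2| := by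
      have e : shrink τ₂ p.2 * shrink τ₁ (p.1 j) - p.2 * p.1 j =
          shrink τ₂ p.2 * (shrink τ₁ (p.1 j) - p.1 j) + p.1 j * (shrink τ₂ p.2 - p.2) := by
        ring
      rw [e]
      exact (abs_add_le _ _).trans (by rw [abs_mul, abs_mul])
    have hys := abs_shrink_le_abs hτ₂.le p.2
    have hxd := abs_shrink_sub_le hτ₁.le (p.1 j)
    have hyd := abs_shrink_sub_le hτ₂.le p.2
    rw [abs_mul]
    by_cases h1 : τ₁ ≤ |p.1 j| <;> by_cases h2 : τ₂ ≤ |p.2|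
    · rw [Set.indicator_of_mem (by exact h1 : p ∈ A), Set.indicator_of_mem (by exact h2 : p ∈ B)]
      have t1 : |shrink τ₂ p.2| * |shrink τ₁ (p.1 j) - p.1 j| ≤ |p.2| * |p.1 j| :=
        mul_le_mul hys hxd (abs_nonneg _) (abs_nonneg _)
      have t2 : |p.1 j| * |shrink τ₂ p.2 - p.2| ≤ |p.1 j| * |p.2| :=
        mul_le_mul_of_nonneg_left hyd (abs_nonneg _)
      nlinarith [abs_nonneg p.2, abs_nonneg (p.1 j)]
    · rw [Set.indicator_of_mem (by exact h1 : p ∈ A),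
        Set.indicator_of_notMem (by exact h2 : p ∉ B)]
      have hy0 : shrink τ₂ p.2 = p.2 := shrink_eq_self (le_of_not_ge h2)
      rw [hy0, mul_one, mul_zero, add_zero,
        show p.2 * shrink τ₁ (p.1 j) - p.2 * p.1 j = p.2 * (shrink τ₁ (p.1 j) - p.1 j) from by
          ring, abs_mul]
      exact mul_le_mul_of_nonneg_left hxd (abs_nonneg _)
    · rw [Set.indicator_of_notMem (by exact h1 : p ∉ A),
        Set.indicator_of_mem (by exact h2 : p ∈ B)]
      have hx0 : shrink τ₁ (p.1 j) = p.1 j := shrink_eq_self (le_of_not_ge h1)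
      rw [hx0, mul_zero, mul_one, zero_add,
        show shrink τ₂ p.2 * p.1 j - p.2 * p.1 j = p.1 j * (shrink τ₂ p.2 - p.2) from by
          ring, abs_mul]
      exact (mul_le_mul_of_nonneg_left hyd (abs_nonneg _)).trans
        (le_of_eq (mul_comm _ _))
    · rw [Set.indicator_of_notMem (by exact h1 : p ∉ A),
        Set.indicator_of_notMem (by exact h2 : p ∉ B)]
      rw [shrink_eq_self (le_of_not_ge h1), shrink_eq_self (le_of_not_ge h2)]
      simp
  -- indicator-product integrability
  have hiA : Integrable
      (fun p : EuclideanSpace ℝ (Fin d) × ℝ => |p.2 * p.1 j| * A.indicator (fun _ => (1:ℝ)) p) μ := by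
    have e : (fun p : EuclideanSpace ℝ (Fin d) × ℝ =>
        |p.2 * p.1 j| * A.indicator (fun _ => (1:ℝ)) p) =
        A.indicator (fun p => |p.2 * p.1 j|) := by
      funext p; by_cases h : p ∈ A <;> simp [h]
    rw [e]; exact intYX.abs.indicator hAm
  have hiB : Integrable
      (fun p : EuclideanSpace ℝ (Fin d) × ℝ => |p.2 * p.1 j| * B.indicator (fun _ => (1:ℝ)) p) μ := by
    have e : (fun p : EuclideanSpace ℝ (Fin d) × ℝ =>
        |p.2 * p.1 j| * B.indicator (fun _ => (1:ℝ)) p) =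
        B.indicator (fun p => |p.2 * p.1 j|) := by
      funext p; by_cases h : p ∈ B <;> simp [h]
    rw [e]; exact intYX.abs.indicator hBm
  -- integral of squares bounded by v₁
  have hsq : ∫ p, ((fun p : EuclideanSpace ℝ (Fin d) × ℝ => p.2 * p.1 j) p) ^ 2 ∂μ ≤ v₁ := by
    have e : ∀ p : EuclideanSpace ℝ (Fin d) × ℝ, (p.2 * p.1 j) ^ 2 = p.2 ^ 2 * p.1 j ^ 2 :=
      fun p => mul_pow _ _ _
    calc ∫ p, (p.2 * p.1 j) ^ 2 ∂μ = ∫ p, p.2 ^ 2 * p.1 j ^ 2 ∂μ := by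
          exact integral_congr_ae (Filter.Eventually.of_forall fun p => e p)
      _ ≤ v₁ := hmom j
  have int2 : Integrable (fun p : EuclideanSpace ℝ (Fin d) × ℝ => (p.2 * p.1 j) ^ 2) μ := by
    simpa [mul_pow] using intY2X2
  -- main first bound
  have key : |∫ p, shrink τ₂ p.2 * shrink τ₁ (p.1 j) ∂μ - ∫ p, p.2 * p.1 j ∂μ| ≤
      Real.sqrt (v₁ * (μ A).toReal) + Real.sqrt (v₁ * (μ B).toReal) := by
    have csA := aux_cauchy_schwarz (μ := μ) (g := fun p => p.2 * p.1 j)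
      (mY.mul mX).aestronglyMeasurable int2 hAm
    have csB := aux_cauchy_schwarz (μ := μ) (g := fun p => p.2 * p.1 j)
      (mY.mul mX).aestronglyMeasurable int2 hBm
    have sA : Real.sqrt ((∫ p, (p.2 * p.1 j) ^ 2 ∂μ) * (μ A).toReal) ≤
        Real.sqrt (v₁ * (μ A).toReal) :=
      Real.sqrt_le_sqrt (mul_le_mul_of_nonneg_right hsq ENNReal.toReal_nonneg)
    have sB : Real.sqrt ((∫ p, (p.2 * p.1 j) ^ 2 ∂μ) * (μ B).toReal) ≤
        Real.sqrt (v₁ * (μ B).toReal) :=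
      Real.sqrt_le_sqrt (mul_le_mul_of_nonneg_right hsq ENNReal.toReal_nonneg)
    calc |∫ p, shrink τ₂ p.2 * shrink τ₁ (p.1 j) ∂μ - ∫ p, p.2 * p.1 j ∂μ|
        = |∫ p, (shrink τ₂ p.2 * shrink τ₁ (p.1 j) - p.2 * p.1 j) ∂μ| := by
          rw [integral_sub int_shr intYX]
      _ ≤ ∫ p, |shrink τ₂ p.2 * shrink τ₁ (p.1 j) - p.2 * p.1 j| ∂μ := by
          simpa [Real.norm_eq_abs] using
            norm_integral_le_integral_norm (μ := μ)
              (fun p : EuclideanSpace ℝ (Fin d) × ℝ =>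
                shrink τ₂ p.2 * shrink τ₁ (p.1 j) - p.2 * p.1 j)
      _ ≤ ∫ p, (|p.2 * p.1 j| * A.indicator (fun _ => (1:ℝ)) p
            + |p.2 * p.1 j| * B.indicator (fun _ => (1:ℝ)) p) ∂μ :=
          integral_mono (int_shr.sub intYX).abs (hiA.add hiB)
            (fun p => hpt p)
      _ = (∫ p, |p.2 * p.1 j| * A.indicator (fun _ => (1:ℝ)) p ∂μ)
            + ∫ p, |p.2 * p.1 j| * B.indicator (fun _ => (1:ℝ)) p ∂μ :=
          integral_add hiA hiB
      _ ≤ Real.sqrt ((∫ p, (p.2 * p.1 j) ^ 2 ∂μ) * (μ A).toReal)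
            + Real.sqrt ((∫ p, (p.2 * p.1 j) ^ 2 ∂μ) * (μ B).toReal) :=
          add_le_add csA csB
      _ ≤ Real.sqrt (v₁ * (μ A).toReal) + Real.sqrt (v₁ * (μ B).toReal) :=
          add_le_add sA sB
  -- tail bounds
  have hAt : (μ A).toReal ≤ 2 * Real.exp (-τ₁^2/(2*σ^2)) :=
    aux_tail_abs hσ hX hτ₁
  have hBt : (μ B).toReal ≤ 2 * Real.exp (-τ₂^2/(2*σ^2)) :=
    aux_tail_abs hσ hysub hτ₂
  have sqrt_exp : ∀ τ : ℝ, 0 < τ → Real.sqrt (v₁ * (2 * Real.exp (-τ^2/(2*σ^2)))) =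
      Real.sqrt (2*v₁) * Real.exp (-(τ^2)/(4*σ^2)) := by
    intro τ hτ
    rw [show v₁ * (2 * Real.exp (-τ^2/(2*σ^2))) = (2*v₁) * Real.exp (-τ^2/(2*σ^2)) by ring,
      Real.sqrt_mul (by positivity), ← Real.exp_half]
    congr 1
    field_simp
    ring
  have s1 : Real.sqrt (v₁ * (μ A).toReal) ≤ Real.sqrt (2*v₁) * Real.exp (-(τ₁^2)/(4*σ^2)) := by
    calc Real.sqrt (v₁ * (μ A).toReal) ≤ Real.sqrt (v₁ * (2 * Real.exp (-τ₁^2/(2*σ^2)))) :=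
          Real.sqrt_le_sqrt (mul_le_mul_of_nonneg_left hAt hv₁.le)
      _ = _ := sqrt_exp τ₁ hτ₁
  have s2 : Real.sqrt (v₁ * (μ B).toReal) ≤ Real.sqrt (2*v₁) * Real.exp (-(τ₂^2)/(4*σ^2)) := by
    calc Real.sqrt (v₁ * (μ B).toReal) ≤ Real.sqrt (v₁ * (2 * Real.exp (-τ₂^2/(2*σ^2)))) :=
          Real.sqrt_le_sqrt (mul_le_mul_of_nonneg_left hBt hv₁.le)
      _ = _ := sqrt_exp τ₂ hτ₂
  refine ⟨key, key.trans ?_⟩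
  rw [mul_add]
  exact add_le_add s1 s2
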